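/- arXiv:1802.06434 — 2 statements merged into one kernel-verified Lean document; each statement's English description precedes it below -/
import Mathlib

section
/- Let α₁,α₂,β₁,β₂ > 0 and define Λ(γ) = h(e^γ)/e^γ - (α₁+α₂+β₁+β₂)/2, where h(z) = (1/2)√((α₁+α₂-(β₁+β₂))²z² + 4(β₁z²+β₂)(α₁z²+α₂)). Then Λ'(0) = 2(α₁β₁ - α₂β₂)/(α₁+α₂+β₁+β₂). -/
theorem stmt_2 (α₁ α₂ β₁ β₂ : ℝ) (hα₁ : 0 < α₁) (hα₂ : 0 < α₂)
    (hβ₁ : 0 < β₁) (hβ₂ : 0 < β₂)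
    (h : ℝ → ℝ)
    (hh : ∀ z : ℝ, h z = (1/2) * Real.sqrt ((α₁ + α₂ - (β₁ + β₂))^2 * z^2
      + 4 * (β₁ * z^2 + β₂) * (α₁ * z^2 + α₂))) :
    deriv (fun γ : ℝ => h (Real.exp γ) / Real.exp γ - (α₁ + α₂ + β₁ + β₂) / 2) 0
    = 2 * (α₁*β₁ - α₂*β₂) / (α₁ + α₂ + β₁ + β₂) := by
  set S := α₁ + α₂ + β₁ + β₂ with hS
  have hSpos : 0 < S := by positivity
  set u : ℝ → ℝ := fun γ => (α₁ + α₂ - (β₁ + β₂))^2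
      + 4 * (α₁*β₁ * Real.exp (2*γ) + α₂*β₁ + α₁*β₂ + α₂*β₂ * Real.exp (-(2*γ)))
    with hu
  have hupos : ∀ γ, 0 < u γ := by
    intro γ
    have := Real.exp_pos (2*γ)
    have := Real.exp_pos (-(2*γ))
    simp only [hu]
    positivity
  have hfun : ∀ γ : ℝ, h (Real.exp γ) / Real.exp γ - S / 2
      = (1/2) * Real.sqrt (u γ) - S / 2 := by
    intro γ
    have he : (0:ℝ) < Real.exp γ := Real.exp_pos γ
    have h2 : Real.exp (2*γ) = Real.exp γ ^ 2 := by
      rw [two_mul, Real.exp_add, sq]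
    have hneg : Real.exp (-(2*γ)) * Real.exp γ ^ 2 = 1 := by
      rw [← h2, ← Real.exp_add]; simp
    have key : (α₁ + α₂ - (β₁ + β₂))^2 * (Real.exp γ)^2
        + 4 * (β₁ * (Real.exp γ)^2 + β₂) * (α₁ * (Real.exp γ)^2 + α₂)
        = u γ * (Real.exp γ)^2 := by
      simp only [hu]
      rw [h2]
      linear_combination (-(4 * α₂ * β₂)) * hneg
    rw [hh, key, Real.sqrt_mul (le_of_lt (hupos γ)), Real.sqrt_sq he.le]
    field_simp
  have hcongr : (fun γ : ℝ => h (Real.exp γ) / Real.exp γ - S / 2)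
      = fun γ => (1/2) * Real.sqrt (u γ) - S / 2 := funext hfun
  rw [hcongr]
  have hu0 : u 0 = S^2 := by simp [hu, hS]; ring
  have hder_u : HasDerivAt u (8 * (α₁*β₁ - α₂*β₂)) 0 := by
    have h1 : HasDerivAt (fun γ : ℝ => Real.exp (2*γ)) 2 0 := by
      simpa using ((hasDerivAt_id (0:ℝ)).const_mul 2).exp
    have h2 : HasDerivAt (fun γ : ℝ => Real.exp (-(2*γ))) (-2) 0 := by
      simpa using (((hasDerivAt_id (0:ℝ)).const_mul 2).neg).exp
    have H := ((((h1.const_mul (α₁*β₁)).add_const (α₂*β₁ + α₁*β₂)).add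
      (h2.const_mul (α₂*β₂))).const_mul 4).const_add ((α₁ + α₂ - (β₁ + β₂))^2)
    have hfe : (fun x : ℝ => (α₁ + α₂ - (β₁ + β₂))^2
        + 4 * ((α₁*β₁ * Real.exp (2*x) + (α₂*β₁ + α₁*β₂)) + α₂*β₂ * Real.exp (-(2*x)))) = u := by
      funext x; simp only [hu]; ring
    simp only [Pi.add_apply] at H
    rw [hfe] at H
    have : (8:ℝ) * (α₁*β₁ - α₂*β₂) = 4 * (α₁*β₁ * 2 + α₂*β₂ * -2) := by ring
    rw [this]
    exact H
  have hu0ne : u 0 ≠ 0 := (hupos 0).ne'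
  have hsqrt : HasDerivAt (fun γ => Real.sqrt (u γ))
      (8 * (α₁*β₁ - α₂*β₂) / (2 * Real.sqrt (u 0))) 0 := hder_u.sqrt hu0ne
  have hfinal : HasDerivAt (fun γ => (1/2) * Real.sqrt (u γ) - S / 2)
      ((1/2) * (8 * (α₁*β₁ - α₂*β₂) / (2 * Real.sqrt (u 0)))) 0 :=
    (hsqrt.const_mul (1/2)).sub_const (S/2)
  rw [hfinal.deriv, hu0, Real.sqrt_sq hSpos.le]
  field_simp
  ring
end

section
/- Let α₁,α₂,β₁,β₂ > 0, z > 0, and let A = [[-(α₁+α₂), zβ₁ + β₂/z], [zα₁ + α₂/z, -(β₁+β₂)]]. Then for all t ≥ 0, the (2,1) entry of exp(tA) equals ((α₁z² + α₂)/h(z))·(e^{ĥ₊(z)t} - e^{ĥ₋(z)t})/2, and the (1,2) entry equals ((β₁z² + β₂)/h(z))·(e^{ĥ₊(z)t} - e^{ĥ₋(z)t})/2, where h(z) and ĥ±(z) are as defined. -/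
theorem stmt_11 (α₁ α₂ β₁ β₂ z : ℝ) (hα₁ : 0 < α₁) (hα₂ : 0 < α₂)
    (hβ₁ : 0 < β₁) (hβ₂ : 0 < β₂) (hz : 0 < z)
    (A : Matrix (Fin 2) (Fin 2) ℝ)
    (hA : A = !![-(α₁ + α₂), z*β₁ + β₂/z; z*α₁ + α₂/z, -(β₁ + β₂)])
    (h hplus hminus : ℝ)
    (hh : h = (1/2) * Real.sqrt ((α₁ + α₂ - (β₁ + β₂))^2 * z^2
      + 4 * (β₁ * z^2 + β₂) * (α₁ * z^2 + α₂)))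
    (hp : hplus = -(α₁ + α₂ + β₁ + β₂) / 2 + h / z)
    (hm : hminus = -(α₁ + α₂ + β₁ + β₂) / 2 - h / z) :
    ∀ t : ℝ, 0 ≤ t →
      (NormedSpace.exp (t • A)) 1 0
        = ((α₁ * z^2 + α₂) / h) * (Real.exp (hplus * t) - Real.exp (hminus * t)) / 2
      ∧ (NormedSpace.exp (t • A)) 0 1
        = ((β₁ * z^2 + β₂) / h) * (Real.exp (hplus * t) - Real.exp (hminus * t)) / 2 := by
  intro t ht
  have hz' : z ≠ 0 := ne_of_gt hz
  have hhpos : 0 < h := by rw [hh]; positivity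
  have hh' : h ≠ 0 := ne_of_gt hhpos
  have hsq : h^2 = ((α₁ + α₂ - (β₁ + β₂))/2)^2*z^2 + (β₁*z^2+β₂)*(α₁*z^2+α₂) := by
    rw [hh, mul_pow, Real.sq_sqrt (by positivity)]; ring
  obtain ⟨b, hb⟩ : ∃ b : ℝ, b = z*β₁ + β₂/z := ⟨_, rfl⟩
  obtain ⟨c, hc⟩ : ∃ c : ℝ, c = z*α₁ + α₂/z := ⟨_, rfl⟩
  obtain ⟨dd, hd⟩ : ∃ dd : ℝ, dd = (α₁ + α₂ - (β₁ + β₂))/2 := ⟨_, rfl⟩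
  obtain ⟨k, hk⟩ : ∃ k : ℝ, k = h/z := ⟨_, rfl⟩
  have hb0 : 0 < b := by rw [hb]; positivity
  have hk0 : 0 < k := by rw [hk]; exact div_pos hhpos hz
  have hb' : b ≠ 0 := ne_of_gt hb0
  have hk' : k ≠ 0 := ne_of_gt hk0
  have key : k^2 = dd^2 + b*c := by
    rw [hk, hb, hc, hd, div_pow, div_eq_iff (by positivity : z^2 ≠ 0)]
    rw [hsq]
    field_simp
  have hkz : k * z = h := by rw [hk]; field_simp
  have hbz : b * z = β₁ * z^2 + β₂ := by rw [hb]; field_simp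
  have hcz : c * z = α₁ * z^2 + α₂ := by rw [hc]; field_simp
  have hp' : hplus = -(α₁ + α₂ + β₁ + β₂) / 2 + k := by rw [hp, hk]
  have hm' : hminus = -(α₁ + α₂ + β₁ + β₂) / 2 - k := by rw [hm, hk]
  have hA' : A = !![-(α₁ + α₂), b; c, -(β₁ + β₂)] := by rw [hA, hb, hc]
  clear hA hb hc hk hp hm hh hsq
  obtain ⟨s, hs⟩ : ∃ s : ℝ, s = (-(2*b*k))⁻¹ := ⟨_, rfl⟩
  have hs2 : s * (-(2*b*k)) = 1 := by rw [hs]; field_simp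
  clear hs
  set P : Matrix (Fin 2) (Fin 2) ℝ := !![b, b; dd+k, dd-k] with hP
  set Q : Matrix (Fin 2) (Fin 2) ℝ := !![(dd-k)*s, -b*s; -(dd+k)*s, b*s] with hQ
  have entry_ext : ∀ a₁ a₂ a₃ a₄ b₁ b₂ b₃ b₄ : ℝ, a₁ = b₁ → a₂ = b₂ → a₃ = b₃ → a₄ = b₄ →
      !![a₁, a₂; a₃, a₄] = !![b₁, b₂; b₃, b₄] := by
    rintro a₁ a₂ a₃ a₄ b₁ b₂ b₃ b₄ rfl rfl rfl rfl; rfl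
  have hPQ : P * Q = 1 := by
    rw [hP, hQ, Matrix.mul_fin_two, Matrix.one_fin_two]
    apply entry_ext <;> first | ring1 | linear_combination hs2
  have hQP : Q * P = 1 := by
    rw [hP, hQ, Matrix.mul_fin_two, Matrix.one_fin_two]
    apply entry_ext <;> first | ring1 | linear_combination hs2
  have hAP : A * P = P * !![hplus, 0; 0, hminus] := by
    rw [hA', hP, Matrix.mul_fin_two, Matrix.mul_fin_two]
    subst hd hp' hm'
    apply entry_ext <;>
      first | ring1 | linear_combination key | linear_combination -key
  have hAeq : A = P * !![hplus, 0; 0, hminus] * Q := by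
    calc A = A * (P * Q) := by rw [hPQ, Matrix.mul_one]
    _ = (A * P) * Q := by rw [Matrix.mul_assoc]
    _ = P * !![hplus, 0; 0, hminus] * Q := by rw [hAP]
  have hsmul : t • (!![hplus, 0; 0, hminus] : Matrix (Fin 2) (Fin 2) ℝ)
      = !![hplus*t, 0; 0, hminus*t] := by
    ext i j
    fin_cases i <;> fin_cases j <;> simp [mul_comm]
  have hconj : t • A = P * !![hplus*t, 0; 0, hminus*t] * Q := by
    rw [hAeq, ← Matrix.smul_mul, ← Matrix.mul_smul, hsmul]
  have hdiag : (!![hplus*t, 0; 0, hminus*t] : Matrix (Fin 2) (Fin 2) ℝ)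
      = Matrix.diagonal ![hplus*t, hminus*t] := by
    ext i j
    fin_cases i <;> fin_cases j <;> simp [Matrix.diagonal]
  have hU : (⟨P, Q, hPQ, hQP⟩ : (Matrix (Fin 2) (Fin 2) ℝ)ˣ) = ⟨P, Q, hPQ, hQP⟩ := rfl
  have hexp : NormedSpace.exp (t • A)
      = P * !![Real.exp (hplus*t), 0; 0, Real.exp (hminus*t)] * Q := by
    have e1 : t • A = (⟨P, Q, hPQ, hQP⟩ : (Matrix (Fin 2) (Fin 2) ℝ)ˣ)
        * Matrix.diagonal ![hplus*t, hminus*t]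
        * ((⟨P, Q, hPQ, hQP⟩ : (Matrix (Fin 2) (Fin 2) ℝ)ˣ)⁻¹ : (Matrix (Fin 2) (Fin 2) ℝ)ˣ) := by
      rw [hconj, hdiag]; rfl
    rw [e1, Matrix.exp_units_conj, Matrix.exp_diagonal]
    have e2 : Matrix.diagonal (NormedSpace.exp ![hplus*t, hminus*t])
        = !![Real.exp (hplus*t), 0; 0, Real.exp (hminus*t)] := by
      ext i j
      fin_cases i <;> fin_cases j <;> simp [Matrix.diagonal, Real.exp_eq_exp_ℝ]
    rw [e2]; rfl
  rw [hexp, hP, hQ, Matrix.mul_fin_two, Matrix.mul_fin_two]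
  have hk2 : (k*2 : ℝ) ≠ 0 := by positivity
  constructor
  · show ((dd+k) * Real.exp (hplus*t) + (dd-k)*0) * ((dd-k)*s)
        + ((dd+k)*0 + (dd-k) * Real.exp (hminus*t)) * (-(dd+k)*s)
      = ((α₁ * z^2 + α₂) / h) * (Real.exp (hplus * t) - Real.exp (hminus * t)) / 2
    rw [← hcz, ← hkz, mul_div_mul_right _ _ hz', div_mul_eq_mul_div, div_div,
      eq_div_iff hk2]
    linear_combination (-2*k*s*(Real.exp (hplus*t) - Real.exp (hminus*t))) * key
      + (c*(Real.exp (hplus*t) - Real.exp (hminus*t))) * hs2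
  · show (b * Real.exp (hplus*t) + b*0) * (-b*s)
        + (b*0 + b * Real.exp (hminus*t)) * (b*s)
      = ((β₁ * z^2 + β₂) / h) * (Real.exp (hplus * t) - Real.exp (hminus * t)) / 2
    rw [← hbz, ← hkz, mul_div_mul_right _ _ hz', div_mul_eq_mul_div, div_div,
      eq_div_iff hk2]
    linear_combination (b*(Real.exp (hplus*t) - Real.exp (hminus*t))) * hs2
end
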